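/- arXiv:2007.05437 — 2 statements merged into one kernel-verified Lean document; each statement's English description precedes it below -/
import Mathlib

section
/- Let G be a finite simple graph and v a vertex. If an edge e of G has trussness τ_G(e) < k+1 (i.e., e is not contained in any connected subgraph of G in which every edge has support at least k-1), then for every vertex u, the edge e is not contained in any connected k-truss of the ego-network G_{N(u)}. -/
open SimpleGraph

/-- The support of an edge `(u,v)` inside a subgraph `H`: the number of common
neighbors of `u` and `v` within `H`. -/
noncomputable def supS {V : Type*} {G : SimpleGraph V} (H : G.Subgraph) (u v : V) : ℕ :=
  Set.ncard {w | H.Adj u w ∧ H.Adj v w}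

/-- The ego-network of `v` in `G`: the subgraph of `G` induced by the neighbors of `v`
(as a graph on the same vertex set, with all non-neighbors isolated). -/
def ego {V : Type*} (G : SimpleGraph V) (v : V) : SimpleGraph V where
  Adj a b := G.Adj a b ∧ G.Adj v a ∧ G.Adj v b
  symm := ⟨fun a b h => ⟨h.1.symm, h.2.2, h.2.1⟩⟩
  loopless := ⟨fun a h => G.irrefl h.1⟩

theorem stmt3 {V : Type*} [Fintype V] (G : SimpleGraph V) (k : ℕ) (hk : 2 ≤ k)
    (a b : V) (hab : G.Adj a b)
    (hlow : ¬ ∃ H : G.Subgraph, H.Connected ∧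
      (∀ x y, H.Adj x y → k - 1 ≤ supS H x y) ∧ H.Adj a b) :
    ∀ u : V, ¬ ∃ K : (ego G u).Subgraph, K.Connected ∧
      (∀ x y, K.Adj x y → k - 2 ≤ supS K x y) ∧ K.Adj a b := by
  intro u
  rintro ⟨K, Kconn, Ksupp, Kab⟩
  apply hlow
  -- every vertex of K has a neighbor within K
  have hnbr : ∀ w ∈ K.verts, ∃ z, K.Adj w z := by
    intro w hw
    have ha : a ∈ K.verts := K.edge_vert Kab
    by_cases hwa : w = a
    · exact ⟨b, hwa ▸ Kab⟩
    · obtain ⟨p⟩ := Kconn.preconnected ⟨w, hw⟩ ⟨a, ha⟩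
      have hne : (⟨w, hw⟩ : K.verts) ≠ ⟨a, ha⟩ := by
        simp [Subtype.ext_iff, hwa]
      have hadj := p.adj_snd (SimpleGraph.Walk.not_nil_of_ne hne)
      exact ⟨((p.getVert 1) : K.verts).1, hadj⟩
  have hGu : ∀ w ∈ K.verts, G.Adj u w := by
    intro w hw
    obtain ⟨z, hz⟩ := hnbr w hw
    exact (K.adj_sub hz : G.Adj w z ∧ G.Adj u w ∧ G.Adj u z).2.1
  -- the enlarged subgraph H of G : K together with u joined to every vertex of K
  set H : G.Subgraph :=
    { verts := insert u K.verts,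
      Adj := fun x y => K.Adj x y ∨ (x = u ∧ y ∈ K.verts) ∨ (y = u ∧ x ∈ K.verts),
      adj_sub := by
        rintro x y (h | ⟨rfl, hy⟩ | ⟨rfl, hx⟩)
        · exact (K.adj_sub h : G.Adj x y ∧ G.Adj u x ∧ G.Adj u y).1
        · exact hGu y hy
        · exact (hGu x hx).symm
      edge_vert := by
        rintro x y (h | ⟨rfl, hy⟩ | ⟨rfl, hx⟩)
        · exact Set.mem_insert_of_mem _ (K.edge_vert h)
        · exact Set.mem_insert _ _
        · exact Set.mem_insert_of_mem _ hx
      symm := by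
        constructor
        rintro x y (h | ⟨rfl, hy⟩ | ⟨rfl, hx⟩)
        · exact Or.inl h.symm
        · exact Or.inr (Or.inr ⟨rfl, hy⟩)
        · exact Or.inr (Or.inl ⟨rfl, hx⟩) } with hHdef
  have hu : u ∈ H.verts := Set.mem_insert _ _
  -- membership / adjacency facts about H
  have hAdjK : ∀ {x y}, K.Adj x y → H.Adj x y := fun h => Or.inl h
  have hAdjU : ∀ {w}, w ∈ K.verts → H.Adj u w := fun hw => Or.inr (Or.inl ⟨rfl, hw⟩)
  refine ⟨H, ?_, ?_, hAdjK Kab⟩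
  · -- connectedness
    rw [SimpleGraph.Subgraph.connected_iff]
    refine ⟨⟨?_⟩, ⟨u, hu⟩⟩
    have reach : ∀ z : H.verts, H.coe.Reachable z ⟨u, hu⟩ := by
      rintro ⟨z, hz⟩
      have hz' : z = u ∨ z ∈ K.verts := hz
      rcases hz' with rfl | hz'
      · exact Reachable.refl _
      · exact SimpleGraph.Adj.reachable
          (show H.Adj z u from (hAdjU hz').symm)
    exact fun x y => (reach x).trans (reach y).symm
  · -- support condition
    rintro x y (h | ⟨hxu, hy⟩ | ⟨hyu, hx⟩)
    · -- K-edge: the common K-neighbors remain, and u is a new common neighbor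
      have hs : insert u {w | K.Adj x w ∧ K.Adj y w} ⊆
          {w | H.Adj x w ∧ H.Adj y w} := by
        rintro w (rfl | ⟨h1, h2⟩)
        · exact ⟨(hAdjU (K.edge_vert h)).symm, (hAdjU (K.edge_vert h.symm)).symm⟩
        · exact ⟨hAdjK h1, hAdjK h2⟩
      have hnotmem : u ∉ {w | K.Adj x w ∧ K.Adj y w} := by
        rintro ⟨h1, -⟩
        exact G.irrefl (K.adj_sub h1 : G.Adj x u ∧ G.Adj u x ∧ G.Adj u u).2.2
      have h1 := Set.ncard_le_ncard hs (Set.toFinite _)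
      rw [Set.ncard_insert_of_notMem hnotmem (Set.toFinite _)] at h1
      have h2 := Ksupp x y h
      unfold supS at h2 ⊢
      exact le_trans (by omega) h1
    · -- edge u-y: every K-neighbor of y is a common neighbor of u and y in H
      rw [hxu]
      obtain ⟨z, hz⟩ := hnbr y hy
      have hs : insert z {w | K.Adj y w ∧ K.Adj z w} ⊆
          {w | H.Adj u w ∧ H.Adj y w} := by
        rintro w (rfl | ⟨h1, -⟩)
        · exact ⟨hAdjU (K.edge_vert hz.symm), hAdjK hz⟩
        · exact ⟨hAdjU (K.edge_vert h1.symm), hAdjK h1⟩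
      have hnotmem : z ∉ {w | K.Adj y w ∧ K.Adj z w} := by
        rintro ⟨-, h2⟩
        exact (K.adj_sub h2 : G.Adj z z ∧ G.Adj u z ∧ G.Adj u z).1.ne rfl
      have h1 := Set.ncard_le_ncard hs (Set.toFinite _)
      rw [Set.ncard_insert_of_notMem hnotmem (Set.toFinite _)] at h1
      have h2 := Ksupp y z hz
      unfold supS at h2 ⊢
      exact le_trans (by omega) h1
    · -- edge x-u: every K-neighbor of x is a common neighbor of x and u in H
      rw [hyu]
      obtain ⟨z, hz⟩ := hnbr x hx
      have hs : insert z {w | K.Adj x w ∧ K.Adj z w} ⊆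
          {w | H.Adj x w ∧ H.Adj u w} := by
        rintro w (rfl | ⟨h1, -⟩)
        · exact ⟨hAdjK hz, hAdjU (K.edge_vert hz.symm)⟩
        · exact ⟨hAdjK h1, hAdjU (K.edge_vert h1.symm)⟩
      have hnotmem : z ∉ {w | K.Adj x w ∧ K.Adj z w} := by
        rintro ⟨-, h2⟩
        exact (K.adj_sub h2 : G.Adj z z ∧ G.Adj u z ∧ G.Adj u z).1.ne rfl
      have h1 := Set.ncard_le_ncard hs (Set.toFinite _)
      rw [Set.ncard_insert_of_notMem hnotmem (Set.toFinite _)] at h1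
      have h2 := Ksupp x z hz
      unfold supS at h2 ⊢
      exact le_trans (by omega) h1
end

section
/- Let F be a maximum-weight spanning forest of an edge-weighted graph W. Then the number of connected components of the subgraph of W formed by edges of weight at least k equals the number of connected components with at least one edge of the subgraph of F formed by edges of weight at least k. -/
open SimpleGraph

/-- The subgraph of `G` formed by the edges of weight at least `k`
(with respect to the edge-weight function `w`). -/
def restrictW {V : Type*} (G : SimpleGraph V) (w : Sym2 V → ℕ) (k : ℕ) : SimpleGraph V where
  Adj a b := G.Adj a b ∧ k ≤ w s(a, b)
  symm := ⟨fun a b h => ⟨h.1.symm, by rw [Sym2.eq_swap]; exact h.2⟩⟩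
  loopless := ⟨fun a h => G.loopless.1 a h.1⟩

/-- `F` is a spanning forest of `W`: an acyclic subgraph with the same
connected components as `W`. -/
def IsSpanningForest {V : Type*} (W F : SimpleGraph V) : Prop :=
  F ≤ W ∧ F.IsAcyclic ∧ ∀ a b : V, F.Reachable a b ↔ W.Reachable a b

/-- The total weight of a graph: the sum of the weights of its edges. -/
noncomputable def totalWeight {V : Type*} (F : SimpleGraph V) (w : Sym2 V → ℕ) : ℕ :=
  ∑ᶠ e ∈ F.edgeSet, w e

section Aux


variable {V : Type*}

/-- Splitting a path at an edge: after deleting that edge, the endpoints of the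
path are still connected to the endpoints of the removed edge appropriately. -/
lemma split_at_edge {G : SimpleGraph V} :
    ∀ {a b : V} (p : G.Walk a b), p.IsPath → ∀ {x y : V}, s(x, y) ∈ p.edges →
      ((G.deleteEdges {s(x, y)}).Reachable a x ∧ (G.deleteEdges {s(x, y)}).Reachable y b) ∨
      ((G.deleteEdges {s(x, y)}).Reachable a y ∧ (G.deleteEdges {s(x, y)}).Reachable x b) := by
  intro a b p
  induction p with
  | nil => intro _ x y he; simp at he
  | @cons a c b h q ih =>
    intro hp x y he
    rw [SimpleGraph.Walk.edges_cons, List.mem_cons] at he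
    rcases he with he | he
    · -- the edge is the first edge of the path
      have hq : ∀ e ∈ q.edges, e ∉ ({s(x, y)} : Set (Sym2 V)) := by
        intro e heq hes
        rw [Set.mem_singleton_iff] at hes
        subst hes
        rw [he] at heq
        have : a ∈ q.support := q.fst_mem_support_of_mem_edges heq
        rw [SimpleGraph.Walk.cons_isPath_iff] at hp
        exact hp.2 this
      have hr : (G.deleteEdges {s(x, y)}).Reachable c b := ⟨q.toDeleteEdges _ hq⟩
      rw [Sym2.eq_iff] at he
      rcases he with ⟨rfl, rfl⟩ | ⟨rfl, rfl⟩
      · exact Or.inl ⟨Reachable.refl _, hr⟩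
      · exact Or.inr ⟨Reachable.refl _, hr⟩
    · -- the edge is in the tail
      have hp' : q.IsPath := hp.of_cons
      have hne : s(a, c) ≠ s(x, y) := by
        intro hcon
        rw [SimpleGraph.Walk.cons_isPath_iff] at hp
        rcases Sym2.eq_iff.mp hcon with ⟨rfl, rfl⟩ | ⟨rfl, rfl⟩
        · exact hp.2 (q.fst_mem_support_of_mem_edges he)
        · exact hp.2 (q.snd_mem_support_of_mem_edges he)
      have hadj : (G.deleteEdges {s(x, y)}).Adj a c := by
        rw [SimpleGraph.deleteEdges_adj]
        exact ⟨h, by simpa using hne⟩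
      rcases ih hp' he with ⟨h1, h2⟩ | ⟨h1, h2⟩
      · exact Or.inl ⟨hadj.reachable.trans h1, h2⟩
      · exact Or.inr ⟨hadj.reachable.trans h1, h2⟩

lemma reach_restrict {G : SimpleGraph V} (w : Sym2 V → ℕ) (k : ℕ) :
    ∀ {a b : V} (p : G.Walk a b), (∀ e ∈ p.edges, k ≤ w e) →
      (restrictW G w k).Reachable a b := by
  intro a b p
  induction p with
  | nil => intro _; exact Reachable.refl _
  | @cons a c b h q ih =>
    intro hall
    have h1 : (restrictW G w k).Adj a c :=
      ⟨h, hall _ (by simp)⟩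
    exact h1.reachable.trans (ih fun e he => hall e (by simp [he]))

lemma reach_mono_of_adj {G H : SimpleGraph V}
    (h : ∀ u v : V, G.Adj u v → H.Reachable u v) :
    ∀ u v : V, G.Reachable u v → H.Reachable u v := by
  intro u v hr
  obtain ⟨p⟩ := hr
  induction p with
  | nil => exact Reachable.refl _
  | @cons a c b hadj q ih => exact (h _ _ hadj).trans ih

end Aux

lemma key_lemma {V : Type*} [Fintype V] (W F : SimpleGraph V) (w : Sym2 V → ℕ)
    (hsf : IsSpanningForest W F)
    (hmax : ∀ F', IsSpanningForest W F' → totalWeight F' w ≤ totalWeight F w)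
    (k : ℕ) {a b : V} (hab : W.Adj a b) (hwab : k ≤ w s(a, b)) :
    (restrictW F w k).Reachable a b := by
  obtain ⟨hle, hac, hreach⟩ := hsf
  have hrF : F.Reachable a b := (hreach a b).mpr hab.reachable
  classical
  obtain ⟨p0⟩ := hrF
  set p : F.Walk a b := p0.bypass with hpdef
  have hp : p.IsPath := p0.bypass_isPath
  suffices hall : ∀ e ∈ p.edges, k ≤ w e by exact reach_restrict w k p hall
  by_contra hcon
  push_neg at hcon
  obtain ⟨e, he, hlt⟩ := hcon
  induction e using Sym2.ind with
  | _ x y =>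
  -- basic facts
  have hxyadj : F.Adj x y := p.edges_subset_edgeSet he
  have hFab : s(a, b) ∉ F.edgeSet := by
    intro hmem
    have hFadj : F.Adj a b := hmem
    have huniq := isAcyclic_iff_path_unique.mp hac (⟨p, hp⟩ : F.Path a b)
      (SimpleGraph.Path.singleton hFadj)
    have : p.edges = [s(a, b)] := by
      have := congrArg (fun q : F.Path a b => q.1.edges) huniq
      simpa [SimpleGraph.Path.singleton] using this
    rw [this] at he
    simp only [List.mem_singleton] at he
    rcases Sym2.eq_iff.mp he with ⟨rfl, rfl⟩ | ⟨rfl, rfl⟩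
    · exact absurd hwab (not_le.mpr hlt)
    · rw [Sym2.eq_swap] at hlt
      exact absurd hwab (not_le.mpr hlt)
  -- bridge: x and y are not reachable after deleting the edge
  have hbr : ¬(F.deleteEdges {s(x, y)}).Reachable x y := by
    intro hre
    obtain ⟨u, c, hc, _⟩ := SimpleGraph.adj_and_reachable_delete_edges_iff_exists_cycle.mp
      ⟨hxyadj, hre⟩
    exact hac c hc
  have hsplit := split_at_edge p hp he
  -- the exchanged forest
  set F' : SimpleGraph V :=
    SimpleGraph.fromEdgeSet ((F.edgeSet \ {s(x, y)}) ∪ {s(a, b)}) with hF'def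
  have hF'adj : ∀ u v : V, F'.Adj u v ↔
      ((s(u, v) ∈ F.edgeSet ∧ s(u, v) ≠ s(x, y)) ∨ s(u, v) = s(a, b)) ∧ u ≠ v := by
    intro u v
    rw [hF'def, SimpleGraph.fromEdgeSet_adj]
    constructor
    · rintro ⟨h1, h2⟩
      rcases h1 with ⟨hm, hm2⟩ | hm
      · exact ⟨Or.inl ⟨hm, hm2⟩, h2⟩
      · exact ⟨Or.inr hm, h2⟩
    · rintro ⟨h1, h2⟩
      rcases h1 with ⟨hm, hm2⟩ | hm
      · exact ⟨Or.inl ⟨hm, hm2⟩, h2⟩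
      · exact ⟨Or.inr hm, h2⟩
  have hD_le_F' : F.deleteEdges {s(x, y)} ≤ F' := by
    intro u v huv
    rw [SimpleGraph.deleteEdges_adj] at huv
    rw [hF'adj]
    exact ⟨Or.inl ⟨huv.1, by simpa using huv.2⟩, huv.1.ne⟩
  have hF'ab : F'.Adj a b := by
    rw [hF'adj]; exact ⟨Or.inr rfl, hab.ne⟩
  have hle' : F' ≤ W := by
    intro u v huv
    rw [hF'adj] at huv
    rcases huv.1 with ⟨hm, _⟩ | hm
    · exact hle hm
    · have : s(u, v) ∈ W.edgeSet := by rw [hm]; exact hab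
      exact this
  -- F-reachability implies F'-reachability
  have hFF' : ∀ u v : V, F.Adj u v → F'.Reachable u v := by
    intro u v huv
    by_cases hne : s(u, v) = s(x, y)
    · have hxy' : F'.Reachable x y := by
        rcases hsplit with ⟨h1, h2⟩ | ⟨h1, h2⟩
        · exact ((reach_mono_of_adj (fun _ _ h => (hD_le_F' h).reachable) _ _ h1).symm.trans
            (hF'ab.reachable.trans (reach_mono_of_adj (fun _ _ h => (hD_le_F' h).reachable) _ _ h2).symm)).symm.symm
        · exact (((reach_mono_of_adj (fun _ _ h => (hD_le_F' h).reachable) _ _ h2).trans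
            hF'ab.reachable.symm).trans
            (reach_mono_of_adj (fun _ _ h => (hD_le_F' h).reachable) _ _ h1)).symm.symm
      rcases Sym2.eq_iff.mp hne with ⟨rfl, rfl⟩ | ⟨rfl, rfl⟩
      · exact hxy'
      · exact hxy'.symm
    · exact (SimpleGraph.Adj.reachable (by rw [hF'adj]; exact ⟨Or.inl ⟨huv, hne⟩, huv.ne⟩))
  -- F' is acyclic
  have hac' : F'.IsAcyclic := by
    intro u c hc
    by_cases hmem : s(a, b) ∈ c.edges
    · have hre := (SimpleGraph.adj_and_reachable_delete_edges_iff_exists_cycle.mpr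
        ⟨u, c, hc, hmem⟩).2
      have hreD : (F.deleteEdges {s(x, y)}).Reachable a b := by
        refine reach_mono_of_adj (fun u' v' h => ?_) _ _ hre
        rw [SimpleGraph.deleteEdges_adj, hF'adj] at h
        obtain ⟨⟨hor, hne'⟩, hnot⟩ := h
        have hneab : s(u', v') ≠ s(a, b) := fun hcon => hnot (by rw [hcon]; rfl)
        rcases hor with ⟨hm, hm2⟩ | hm
        · refine SimpleGraph.Adj.reachable ?_
          rw [SimpleGraph.deleteEdges_adj]
          exact ⟨(SimpleGraph.mem_edgeSet (G := F)).mp hm, by simpa using hm2⟩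
        · exact absurd hm hneab
      apply hbr
      rcases hsplit with ⟨h1, h2⟩ | ⟨h1, h2⟩
      · exact h1.symm.trans (hreD.trans h2.symm)
      · exact (h2.trans hreD.symm).trans h1
    · have hcsub : ∀ e ∈ c.edges, e ∈ F.edgeSet := by
        intro e hec
        have : e ∈ F'.edgeSet := c.edges_subset_edgeSet hec
        rw [hF'def, SimpleGraph.edgeSet_fromEdgeSet] at this
        rcases this.1 with hm | hm
        · exact hm.1
        · rw [Set.mem_singleton_iff] at hm
          exact absurd (hm ▸ hec) hmem
      have := (hc.transfer hcsub)
      exact hac _ this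
  -- F' is a spanning forest
  have hsf' : IsSpanningForest W F' := by
    refine ⟨hle', hac', fun u v => ⟨fun h => h.mono hle', fun h => ?_⟩⟩
    exact reach_mono_of_adj hFF' u v ((hreach u v).mpr h)
  -- weight computation
  have hEfin : F.edgeSet.Finite := Set.toFinite _
  have hxyE : s(x, y) ∈ F.edgeSet := hxyadj
  have hE' : F'.edgeSet = (F.edgeSet \ {s(x, y)}) ∪ {s(a, b)} := by
    rw [hF'def, SimpleGraph.edgeSet_fromEdgeSet]
    rw [sdiff_eq_self_iff_disjoint.mpr ?_]
    rw [Set.disjoint_left]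
    rintro e he2 he1
    rw [Sym2.mem_diagSet] at he2
    rcases he1 with ⟨hm, _⟩ | hm
    · exact F.not_isDiag_of_mem_edgeSet hm he2
    · rw [Set.mem_singleton_iff] at hm
      subst hm
      exact hab.ne (Sym2.mk_isDiag_iff.mp he2)
  have hdisj1 : Disjoint (F.edgeSet \ {s(x, y)}) ({s(a, b)} : Set (Sym2 V)) := by
    rw [Set.disjoint_singleton_right]
    exact fun hcon => hFab hcon.1
  have hdisj2 : Disjoint (F.edgeSet \ {s(x, y)}) ({s(x, y)} : Set (Sym2 V)) := by
    rw [Set.disjoint_singleton_right]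
    exact fun hcon => hcon.2 rfl
  have hsum' : totalWeight F' w = (∑ᶠ e ∈ F.edgeSet \ {s(x, y)}, w e) + w s(a, b) := by
    rw [totalWeight, hE', finsum_mem_union hdisj1 (hEfin.diff) (Set.finite_singleton _),
      finsum_mem_singleton]
  have hsum : totalWeight F w = (∑ᶠ e ∈ F.edgeSet \ {s(x, y)}, w e) + w s(x, y) := by
    conv_lhs => rw [totalWeight, ← Set.diff_union_of_subset (Set.singleton_subset_iff.mpr hxyE)]
    rw [finsum_mem_union hdisj2 (hEfin.diff) (Set.finite_singleton _), finsum_mem_singleton]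
  have := hmax F' hsf'
  rw [hsum', hsum] at this
  omega

theorem stmt8 {V : Type*} [Fintype V] (W F : SimpleGraph V) (w : Sym2 V → ℕ)
    (hsf : IsSpanningForest W F)
    (hmax : ∀ F', IsSpanningForest W F' → totalWeight F' w ≤ totalWeight F w)
    (k : ℕ) :
    Nat.card {c : (restrictW W w k).ConnectedComponent //
        ∃ a b, (restrictW W w k).Adj a b ∧ (restrictW W w k).connectedComponentMk a = c} =
    Nat.card {c : (restrictW F w k).ConnectedComponent //
        ∃ a b, (restrictW F w k).Adj a b ∧ (restrictW F w k).connectedComponentMk a = c} := by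
  have hFW : restrictW F w k ≤ restrictW W w k := fun u v h => ⟨hsf.1 h.1, h.2⟩
  have hreach : ∀ u v : V,
      (restrictW W w k).Reachable u v ↔ (restrictW F w k).Reachable u v := by
    intro u v
    constructor
    · exact reach_mono_of_adj (G := restrictW W w k) (H := restrictW F w k) (fun u' v' h => key_lemma W F w hsf hmax k h.1 h.2) u v
    · exact fun h => h.mono hFW
  let φ : (restrictW W w k).ConnectedComponent → (restrictW F w k).ConnectedComponent :=
    ConnectedComponent.lift (fun v => (restrictW F w k).connectedComponentMk v)
      (fun u v p _ => ConnectedComponent.sound ((hreach u v).mp ⟨p⟩))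
  let ψ : (restrictW F w k).ConnectedComponent → (restrictW W w k).ConnectedComponent :=
    ConnectedComponent.lift (fun v => (restrictW W w k).connectedComponentMk v)
      (fun u v p _ => ConnectedComponent.sound ((hreach u v).mpr ⟨p⟩))
  have hψφ : ∀ c, ψ (φ c) = c := ConnectedComponent.ind (fun _ => rfl)
  have hφψ : ∀ c, φ (ψ c) = c := ConnectedComponent.ind (fun _ => rfl)
  refine Nat.card_congr ⟨fun c => ⟨φ c.1, ?_⟩, fun c => ⟨ψ c.1, ?_⟩, ?_, ?_⟩
  · obtain ⟨c, a, b, hab, hc⟩ := c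
    subst hc
    obtain ⟨p⟩ : (restrictW F w k).Reachable a b := (hreach a b).mp hab.reachable
    cases p with
    | nil => exact absurd rfl hab.ne
    | cons h q => exact ⟨a, _, h, rfl⟩
  · obtain ⟨c, a, b, hab, hc⟩ := c
    subst hc
    exact ⟨a, b, hFW hab, rfl⟩
  · rintro ⟨c, hc⟩
    exact Subtype.ext (hψφ c)
  · rintro ⟨c, hc⟩
    exact Subtype.ext (hφψ c)
end
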